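/- Let ω ∈ ℝ, let V, f : ℝ → ℝ with f three times differentiable and V differentiable, let u : ℝ → ℂ be twice differentiable, and set H = u'' + (ω² − V)u. Define Q^f = f·(|u'|² + (ω² − V)|u|²) + f'·Re(u' \overline{u}) − (1/2)f''·|u|². Then (Q^f)' = 2f'|u'|² − fV'|u|² + Re(2f \overline{H} u' + f' \overline{H} u) − (1/2)f'''|u|². -/

import Mathlib

private lemma myconj {u : ℝ → ℂ} {a : ℂ} {x : ℝ} (h : HasDerivAt u a x) :
    HasDerivAt (fun y => (starRingEnd ℂ) (u y)) ((starRingEnd ℂ) a) x := by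
  exact (Complex.conjCLE.hasFDerivAt.comp_hasDerivAt x h)

private lemma myre {g : ℝ → ℂ} {a : ℂ} {x : ℝ} (h : HasDerivAt g a x) :
    HasDerivAt (fun y => (g y).re) a.re x := by
  exact (Complex.reCLM.hasFDerivAt.comp_hasDerivAt x h)

/-- Derivative identity for the frequency-localised virial current Q^f applied to a
solution u of u'' + (ω² − V)u = H:
`(Q^f)' = 2f'|u'|² − fV'|u|² + Re(2f H̄ u' + f' H̄ u) − (1/2)f'''|u|²`. -/
theorem stmt_12 (ω : ℝ) (V f : ℝ → ℝ) (u : ℝ → ℂ)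
    (hV : Differentiable ℝ V)
    (hf : Differentiable ℝ f) (hf' : Differentiable ℝ (deriv f))
    (hf'' : Differentiable ℝ (deriv (deriv f)))
    (hu : Differentiable ℝ u) (hu' : Differentiable ℝ (deriv u))
    (H : ℝ → ℂ)
    (hH : ∀ x, H x = deriv (deriv u) x + ((ω ^ 2 - V x : ℝ) : ℂ) * u x)
    (Q : ℝ → ℝ)
    (hQ : ∀ x, Q x = f x * (‖deriv u x‖ ^ 2 + (ω ^ 2 - V x) * ‖u x‖ ^ 2)
        + deriv f x * (deriv u x * starRingEnd ℂ (u x)).re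
        - (1 / 2) * deriv (deriv f) x * ‖u x‖ ^ 2) :
    ∀ x : ℝ, deriv Q x
      = 2 * deriv f x * ‖deriv u x‖ ^ 2 - f x * deriv V x * ‖u x‖ ^ 2
        + (2 * ((f x : ℝ) : ℂ) * starRingEnd ℂ (H x) * deriv u x
            + ((deriv f x : ℝ) : ℂ) * starRingEnd ℂ (H x) * u x).re
        - (1 / 2) * deriv (deriv (deriv f)) x * ‖u x‖ ^ 2 := by
  intro x
  -- real derivatives
  have hu1 : HasDerivAt u (deriv u x) x := (hu x).hasDerivAt
  have hu2 : HasDerivAt (deriv u) (deriv (deriv u) x) x := (hu' x).hasDerivAt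
  have hf1 : HasDerivAt (fun y => ((f y : ℝ) : ℂ)) ((deriv f x : ℝ) : ℂ) x :=
    (hf x).hasDerivAt.ofReal_comp
  have hf2 : HasDerivAt (fun y => ((deriv f y : ℝ) : ℂ)) ((deriv (deriv f) x : ℝ) : ℂ) x :=
    (hf' x).hasDerivAt.ofReal_comp
  have hf3 : HasDerivAt (fun y => ((deriv (deriv f) y : ℝ) : ℂ))
      ((deriv (deriv (deriv f)) x : ℝ) : ℂ) x :=
    (hf'' x).hasDerivAt.ofReal_comp
  have hcC : HasDerivAt (fun y => ((ω ^ 2 - V y : ℝ) : ℂ)) (-((deriv V x : ℝ) : ℂ)) x := by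
    have h0 : HasDerivAt (fun y => ω ^ 2 - V y) (0 - deriv V x) x :=
      (hasDerivAt_const x (ω ^ 2)).sub (hV x).hasDerivAt
    have := h0.ofReal_comp
    push_cast at this ⊢
    simpa using this
  -- pieces
  have hC : HasDerivAt (fun y => u y * (starRingEnd ℂ) (u y))
      (deriv u x * (starRingEnd ℂ) (u x) + u x * (starRingEnd ℂ) (deriv u x)) x :=
    hu1.mul (myconj hu1)
  have hM : HasDerivAt (fun y => deriv u y * (starRingEnd ℂ) (deriv u y))
      (deriv (deriv u) x * (starRingEnd ℂ) (deriv u x)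
        + deriv u x * (starRingEnd ℂ) (deriv (deriv u) x)) x :=
    hu2.mul (myconj hu2)
  have hB : HasDerivAt (fun y => deriv u y * (starRingEnd ℂ) (u y))
      (deriv (deriv u) x * (starRingEnd ℂ) (u x)
        + deriv u x * (starRingEnd ℂ) (deriv u x)) x :=
    hu2.mul (myconj hu1)
  have hA : HasDerivAt
      (fun y => deriv u y * (starRingEnd ℂ) (deriv u y)
        + ((ω ^ 2 - V y : ℝ) : ℂ) * (u y * (starRingEnd ℂ) (u y)))
      ((deriv (deriv u) x * (starRingEnd ℂ) (deriv u x)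
          + deriv u x * (starRingEnd ℂ) (deriv (deriv u) x))
        + (-((deriv V x : ℝ) : ℂ) * (u x * (starRingEnd ℂ) (u x))
          + ((ω ^ 2 - V x : ℝ) : ℂ)
            * (deriv u x * (starRingEnd ℂ) (u x) + u x * (starRingEnd ℂ) (deriv u x)))) x :=
    hM.add (hcC.mul hC)
  have hhalf : HasDerivAt (fun y => ((1 / 2 : ℝ) : ℂ) * ((deriv (deriv f) y : ℝ) : ℂ))
      (((1 / 2 : ℝ) : ℂ) * ((deriv (deriv (deriv f)) x : ℝ) : ℂ)) x :=
    hf3.const_mul _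
  have hQc := ((hf1.mul hA).add (hf2.mul hB)).sub (hhalf.mul hC)
  have key := myre hQc
  have hQeq : Q = fun y =>
      ((((f y : ℝ) : ℂ) * (deriv u y * (starRingEnd ℂ) (deriv u y)
          + ((ω ^ 2 - V y : ℝ) : ℂ) * (u y * (starRingEnd ℂ) (u y)))
        + ((deriv f y : ℝ) : ℂ) * (deriv u y * (starRingEnd ℂ) (u y))
        - ((1 / 2 : ℝ) : ℂ) * ((deriv (deriv f) y : ℝ) : ℂ)
            * (u y * (starRingEnd ℂ) (u y))).re) := by
    funext y
    rw [hQ y]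
    simp only [Complex.sq_norm, Complex.normSq_apply, Complex.add_re,
      Complex.sub_re, Complex.mul_re, Complex.mul_im, Complex.add_im, Complex.sub_im,
      Complex.ofReal_re, Complex.ofReal_im, Complex.conj_re, Complex.conj_im]
    ring
  rw [hQeq]; erw [key.deriv]; rw [hH x]
  simp only [Complex.sq_norm, Complex.normSq_apply, Complex.add_re,
    Complex.sub_re, Complex.mul_re, Complex.mul_im, Complex.add_im, Complex.sub_im,
    Complex.ofReal_re, Complex.ofReal_im, Complex.conj_re, Complex.conj_im, Complex.neg_re,
    Complex.neg_im, Complex.re_ofNat, Complex.im_ofNat]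
  ring
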